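/- For integers d ≥ 1 and 0 ≤ κ ≤ d, with m = κ, one has (1/2^d)·∑_{ε∈{±1}^d} ε_1⋯ε_κ (ε_1+⋯+ε_d)^κ = κ!. -/

import Mathlib

open Finset

private lemma sum_units_pow (e : ℕ) :
    ∑ s : ℤˣ, ((s : ℤ) : ℚ) ^ e = if Even e then 2 else 0 := by
  have huniv : (Finset.univ : Finset ℤˣ) = {1, -1} := by decide
  rw [huniv]
  rcases Nat.even_or_odd e with he | he
  · norm_num [he.neg_pow, he]
  · simp [he.neg_pow, Nat.not_even_iff_odd.mpr he]

/-- For `m = κ` the normalized signed moment sum equals `κ!`. -/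
theorem sign_moment_kappa (d κ : ℕ) (hd : 1 ≤ d) (hκ : κ ≤ d) :
    (1 / 2 ^ d : ℚ) * ∑ ε : Fin d → ℤˣ,
        (∏ i ∈ Finset.univ.filter (fun i : Fin d => (i : ℕ) < κ), ((ε i : ℤ) : ℚ)) *
          (∑ i, ((ε i : ℤ) : ℚ)) ^ κ = (Nat.factorial κ : ℚ) := by
  classical
  -- the fiber count of g over i
  set c : (Fin κ → Fin d) → Fin d → ℕ :=
    fun g i => (univ.filter (fun j => g j = i)).card with hc
  -- the exponent of ε i in the term for g
  set e : (Fin κ → Fin d) → Fin d → ℕ :=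
    fun g i => (if (i : ℕ) < κ then 1 else 0) + c g i with he
  -- step 1: the main sum equals ∑ g, ∏ i, (∑ s, s ^ e g i)
  have key : ∑ ε : Fin d → ℤˣ,
      (∏ i ∈ Finset.univ.filter (fun i : Fin d => (i : ℕ) < κ), ((ε i : ℤ) : ℚ)) *
        (∑ i, ((ε i : ℤ) : ℚ)) ^ κ
      = ∑ g : Fin κ → Fin d, ∏ i : Fin d, ∑ s : ℤˣ, ((s : ℤ) : ℚ) ^ e g i := by
    have expand : ∀ ε : Fin d → ℤˣ,
        ((∑ i, ((ε i : ℤ) : ℚ)) ^ κ) = ∑ g : Fin κ → Fin d, ∏ j, ((ε (g j) : ℤ) : ℚ) := by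
      intro ε
      rw [← Fin.prod_const κ (∑ i, ((ε i : ℤ) : ℚ)),
        Finset.prod_univ_sum (fun _ : Fin κ => (univ : Finset (Fin d)))
          (fun _ i => ((ε i : ℤ) : ℚ)), Fintype.piFinset_univ]
    have prodcomp : ∀ (ε : Fin d → ℤˣ) (g : Fin κ → Fin d),
        (∏ j, ((ε (g j) : ℤ) : ℚ)) = ∏ i : Fin d, ((ε i : ℤ) : ℚ) ^ c g i := by
      intro ε g
      rw [Finset.prod_comp (fun i => ((ε i : ℤ) : ℚ)) g]
      refine Finset.prod_subset (Finset.subset_univ _) ?_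
      intro x _ hx
      have hzero : (univ.filter (fun j => g j = x)).card = 0 := by
        simp only [Finset.card_eq_zero, Finset.filter_eq_empty_iff]
        intro j _ h
        exact hx (h ▸ Finset.mem_image_of_mem g (Finset.mem_univ j))
      simp [hzero]
    simp_rw [expand, Finset.mul_sum]
    rw [Finset.sum_comm]
    refine Finset.sum_congr rfl fun g _ => ?_
    have lhs_eq : ∀ ε : Fin d → ℤˣ,
        (∏ i ∈ Finset.univ.filter (fun i : Fin d => (i : ℕ) < κ), ((ε i : ℤ) : ℚ)) *
          (∏ j, ((ε (g j) : ℤ) : ℚ))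
        = ∏ i : Fin d, ((ε i : ℤ) : ℚ) ^ e g i := by
      intro ε
      rw [prodcomp ε g, he]
      rw [Finset.prod_filter]
      rw [← Finset.prod_mul_distrib]
      refine Finset.prod_congr rfl fun i _ => ?_
      by_cases h : (i : ℕ) < κ <;> simp [h, pow_add]
    simp_rw [lhs_eq]
    rw [Finset.prod_univ_sum (fun _ : Fin d => (univ : Finset ℤˣ))
      (fun i s => ((s : ℤ) : ℚ) ^ e g i), Fintype.piFinset_univ]
  rw [key]
  -- step 2: each inner sum is 2 or 0
  have step2 : ∀ g : Fin κ → Fin d, (∏ i : Fin d, ∑ s : ℤˣ, ((s : ℤ) : ℚ) ^ e g i)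
      = if (∀ i, Even (e g i)) then (2 : ℚ) ^ d else 0 := by
    intro g
    simp_rw [sum_units_pow]
    by_cases h : ∀ i, Even (e g i)
    · rw [if_pos h]
      rw [Finset.prod_congr rfl (fun i _ => if_pos (h i)), Finset.prod_const, Finset.card_univ,
        Fintype.card_fin]
    · rw [if_neg h]
      push_neg at h
      obtain ⟨i, hi⟩ := h
      exact Finset.prod_eq_zero (Finset.mem_univ i) (if_neg hi)
  simp_rw [step2]
  rw [← Finset.sum_filter]
  rw [Finset.sum_const]
  -- step 3: the number of good maps is κ!
  have cardF : (univ.filter (fun i : Fin d => (i : ℕ) < κ)).card = κ := by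
    have hFeq : univ.filter (fun i : Fin d => (i : ℕ) < κ)
        = Finset.map (Fin.castLEEmb hκ) univ := by
      ext i
      simp only [Finset.mem_filter, Finset.mem_univ, true_and, Finset.mem_map]
      constructor
      · intro hi
        refine ⟨⟨(i : ℕ), hi⟩, ?_⟩
        ext
        simp [Fin.castLEEmb]
      · rintro ⟨j, rfl⟩
        simpa [Fin.castLEEmb] using j.2
    rw [hFeq, Finset.card_map, Finset.card_univ, Fintype.card_fin]
  have total : ∀ g : Fin κ → Fin d, ∑ i : Fin d, c g i = κ := by
    intro g
    have := Finset.card_eq_sum_card_fiberwise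
      (f := g) (s := (univ : Finset (Fin κ))) (t := (univ : Finset (Fin d)))
      (fun x _ => Finset.mem_univ _)
    simpa [hc] using this.symm
  -- characterization of good maps
  have PiffQ : ∀ g : Fin κ → Fin d,
      (∀ i, Even (e g i)) ↔ (∀ i : Fin d, c g i = if (i : ℕ) < κ then 1 else 0) := by
    intro g
    constructor
    · intro hP
      have h1 : ∀ i ∈ univ.filter (fun i : Fin d => (i : ℕ) < κ), 1 ≤ c g i := by
        intro i hi
        rw [Finset.mem_filter] at hi
        have := hP i
        rw [he] at this
        simp only [if_pos hi.2] at this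
        rw [add_comm, Nat.even_add_one] at this
        exact Nat.one_le_iff_ne_zero.mpr (by
          intro h0; exact this (h0 ▸ Even.zero))
      have hsum_le : ∑ i ∈ univ.filter (fun i : Fin d => (i : ℕ) < κ), c g i ≤ κ := by
        rw [← total g]
        exact Finset.sum_le_sum_of_subset (Finset.subset_univ _)
      have hsum_ge : κ ≤ ∑ i ∈ univ.filter (fun i : Fin d => (i : ℕ) < κ), c g i := by
        calc κ = ∑ _i ∈ univ.filter (fun i : Fin d => (i : ℕ) < κ), 1 := by
                  rw [Finset.sum_const, cardF, smul_eq_mul, mul_one]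
          _ ≤ _ := Finset.sum_le_sum h1
      have hFsum : ∑ i ∈ univ.filter (fun i : Fin d => (i : ℕ) < κ), c g i = κ :=
        le_antisymm hsum_le hsum_ge
      have hsum_eq : ∑ _i ∈ univ.filter (fun i : Fin d => (i : ℕ) < κ), 1
          = ∑ i ∈ univ.filter (fun i : Fin d => (i : ℕ) < κ), c g i := by
        rw [Finset.sum_const, cardF, smul_eq_mul, mul_one, hFsum]
      have hone : ∀ i ∈ univ.filter (fun i : Fin d => (i : ℕ) < κ), 1 = c g i :=
        (Finset.sum_eq_sum_iff_of_le h1).mp hsum_eq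
      have hzero : ∀ i ∈ univ.filter (fun i : Fin d => ¬ (i : ℕ) < κ), c g i = 0 := by
        have hsplit := Finset.sum_filter_add_sum_filter_not
          (univ : Finset (Fin d)) (fun i : Fin d => (i : ℕ) < κ) (c g)
        rw [total g, hFsum] at hsplit
        have hz : ∑ i ∈ univ.filter (fun i : Fin d => ¬ (i : ℕ) < κ), c g i = 0 := by omega
        exact (Finset.sum_eq_zero_iff).mp hz
      intro i
      by_cases hi : (i : ℕ) < κ
      · rw [if_pos hi]
        exact (hone i (Finset.mem_filter.mpr ⟨Finset.mem_univ _, hi⟩)).symm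
      · rw [if_neg hi]
        exact hzero i (Finset.mem_filter.mpr ⟨Finset.mem_univ _, hi⟩)
    · intro hQ i
      rw [he]
      by_cases hi : (i : ℕ) < κ <;> simp [hQ i, hi]
  rw [Finset.filter_congr (fun g _ => by rw [PiffQ g])]
  -- step 4: count maps with prescribed fiber cardinalities
  have hcount : (univ.filter (fun g : Fin κ → Fin d =>
      ∀ i : Fin d, c g i = if (i : ℕ) < κ then 1 else 0)).card = Nat.factorial κ := by
    have himg : univ.filter (fun g : Fin κ → Fin d =>
        ∀ i : Fin d, c g i = if (i : ℕ) < κ then 1 else 0)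
        = Finset.image (fun σ : Fin κ ↪ Fin κ => fun j => Fin.castLE hκ (σ j)) univ := by
      ext g
      simp only [Finset.mem_filter, Finset.mem_univ, true_and, Finset.mem_image]
      constructor
      · intro hQ
        have hlt : ∀ j, (g j : ℕ) < κ := by
          intro j
          by_contra hcon
          have h0 : c g (g j) = 0 := by rw [hQ (g j), if_neg hcon]
          simp only [hc] at h0
          have hmem : j ∈ univ.filter (fun j' => g j' = g j) := by simp
          have hpos := Finset.card_pos.mpr ⟨j, hmem⟩
          omega
        have hinj : Function.Injective g := by
          intro a b hab
          have h1 : c g (g a) = 1 := by rw [hQ (g a), if_pos (hlt a)]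
          simp only [hc] at h1
          have hca := Finset.card_le_one.mp (le_of_eq h1)
          exact hca a (by simp) b (by simp [hab])
        refine ⟨⟨fun j => ⟨(g j : ℕ), hlt j⟩, ?_⟩, ?_⟩
        · intro a b hab
          simp only [Fin.mk.injEq] at hab
          exact hinj (Fin.ext hab)
        · funext j
          ext
          simp
          rfl
      · rintro ⟨σ, rfl⟩
        intro i
        simp only [hc]
        by_cases hi : (i : ℕ) < κ
        · rw [if_pos hi]
          obtain ⟨j0, hj0⟩ := (Finite.injective_iff_surjective.mp σ.injective) ⟨(i : ℕ), hi⟩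
          have : univ.filter (fun j => Fin.castLE hκ (σ j) = i) = {j0} := by
            ext j
            simp only [Finset.mem_filter, Finset.mem_univ, true_and, Finset.mem_singleton]
            constructor
            · intro hj
              apply σ.injective
              rw [hj0]
              ext
              simpa using congrArg Fin.val hj
            · rintro rfl
              rw [hj0]
              ext
              simp
          rw [this, Finset.card_singleton]
        · rw [if_neg hi]
          rw [Finset.card_eq_zero, Finset.filter_eq_empty_iff]
          intro j _
          intro hj
          apply hi
          rw [← hj]
          simpa using (σ j).2
    rw [himg]
    rw [Finset.card_image_of_injOn]
    · rw [Finset.card_univ, Fintype.card_embedding_eq, Fintype.card_fin,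
        Nat.descFactorial_self]
    · intro σ1 _ σ2 _ hσ
      ext j
      have := congrFun hσ j
      simpa [Fin.castLE] using congrArg Fin.val this
  rw [hcount, nsmul_eq_mul]
  have h2 : (2 : ℚ) ^ d ≠ 0 := by positivity
  field_simp
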